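/- Let U be a nonempty finite set of positive integers and let p = (p_1, p_2) be an ordered partition of |U| with p' = (p_2, p_1). Then the map F ↦ F' (taking a tiered forest to its dual) is a bijection from the set of tiered forests on vertex set U with tier sizes (p_1, p_2) to the set of tiered forests on vertex set U with tier sizes (p_2, p_1). -/

import Mathlib

open Finset

attribute [local instance 10] Classical.propDecidable

noncomputable section

/-- An edge of a simple graph on `ℕ`, stored as an ordered pair `(u,v)` with `u < v` intended. -/
abbrev PEdge : Type := ℕ × ℕ

/-- A labelled edge (for multigraphs): an endpoint pair together with a label. -/
abbrev LEdge : Type := (ℕ × ℕ) × ℕ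

def adjP (E : Finset PEdge) (u v : ℕ) : Prop := (u, v) ∈ E ∨ (v, u) ∈ E

def reachP (E : Finset PEdge) : ℕ → ℕ → Prop := Relation.ReflTransGen (adjP E)

def connP (V : Finset ℕ) (E : Finset PEdge) : Prop :=
  (∀ e ∈ E, e.1 ∈ V ∧ e.2 ∈ V) ∧ ∀ u ∈ V, ∀ v ∈ V, reachP E u v

def IsTreeOn (V : Finset ℕ) (E : Finset PEdge) : Prop := connP V E ∧ E.card + 1 = V.card

/-- A graph on a finite set of naturals together with a tiering map. -/
structure PreGraph where
  V : Finset ℕ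
  E : Finset PEdge
  t : ℕ → ℕ

/-- `G` is a tiered graph with two tiers. -/
def IsTiered (G : PreGraph) : Prop :=
  (∀ v ∈ G.V, 0 < v) ∧
  (∀ e ∈ G.E, e.1 ∈ G.V ∧ e.2 ∈ G.V ∧ e.1 < e.2) ∧
  (∀ v ∈ G.V, G.t v = 1 ∨ G.t v = 2) ∧
  (∀ e ∈ G.E, G.t e.1 < G.t e.2)

/-- acyclicity: every edge is a bridge. -/
def IsForest (G : PreGraph) : Prop := ∀ e ∈ G.E, ¬ reachP (G.E.erase e) e.1 e.2

def IsTreeG (G : PreGraph) : Prop := IsTreeOn G.V G.E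

/-- the connected component (vertex set) of `x`. -/
def comp (V : Finset ℕ) (E : Finset PEdge) (x : ℕ) : Finset ℕ :=
  V.filter fun y => reachP E x y

/-- the order-reversing involution `x_i ↦ x_{s+1-i}` of a finite set `V = {x_1 < ... < x_s}`. -/
def flipMap (V : Finset ℕ) (x : ℕ) : ℕ :=
  if hx : x ∈ V then
    ((V.orderIsoOfFin rfl)
      ⟨V.card - 1 - ((V.orderIsoOfFin rfl).symm ⟨x, hx⟩).1, by
        have h := ((V.orderIsoOfFin rfl).symm ⟨x, hx⟩).isLt; omega⟩).1
  else x

/-- the dual of a (connected) tiered graph, via the global vertex ordering. -/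
def dual (G : PreGraph) : PreGraph where
  V := G.V
  E := G.E.image fun e => (flipMap G.V e.2, flipMap G.V e.1)
  t := fun x => if x ∈ G.V then 3 - G.t (flipMap G.V x) else G.t x

/-- the componentwise dual of a (possibly disconnected) tiered graph. -/
def cdual (G : PreGraph) : PreGraph where
  V := G.V
  E := G.E.image fun e => (flipMap (comp G.V G.E e.1) e.2, flipMap (comp G.V G.E e.1) e.1)
  t := fun x => if x ∈ G.V then 3 - G.t (flipMap (comp G.V G.E x) x) else G.t x

/-- the recursive weight of a tiered tree (fuel-based implementation; the recursion
depth is bounded by the number of vertices). -/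
def weightAux : ℕ → PreGraph → ℕ
  | 0, _ => 0
  | fuel + 1, T =>
    if h : 2 ≤ T.V.card then
      let v := T.V.min' (Finset.card_pos.mp (by omega))
      let V' := T.V.erase v
      let E' := T.E.filter fun e => e.1 ≠ v ∧ e.2 ≠ v
      ∑ u ∈ V'.filter (fun u => adjP T.E v u),
        (((comp V' E' u).filter fun y => y < u ∧ T.t v < T.t y).card
          + weightAux fuel ⟨comp V' E' u, E'.filter fun e => e.1 ∈ comp V' E' u, T.t⟩)
    else 0

def weight (T : PreGraph) : ℕ := weightAux T.V.card T

/-- edges of a complete tiered graph with tier 1 vertex set `A` and tier 2 vertex set `B`. -/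
def ctE2 (A B : Finset ℕ) : Finset PEdge := (A ×ˢ B).filter fun e => e.1 < e.2

/-- the edge set of the complete tiered graph determined by a two-tier tiered graph `G`. -/
def ctE (G : PreGraph) : Finset PEdge :=
  ctE2 (G.V.filter fun v => G.t v = 1) (G.V.filter fun v => G.t v = 2)

/-- edge set of the complete tiered graph on `[n]` determined by a tiering map `t`. -/
def ctEM (n : ℕ) (t : ℕ → ℕ) : Finset PEdge :=
  (Finset.Icc 1 n ×ˢ Finset.Icc 1 n).filter fun e => e.1 < e.2 ∧ t e.1 < t e.2

def extActiveP (T : Finset PEdge) (ω : PEdge → ℝ) (e : PEdge) : Prop :=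
  e ∉ T ∧ reachP T e.1 e.2 ∧ ∀ e' ∈ T, ¬ reachP (T.erase e') e.1 e.2 → ω e < ω e'

/-- external activity of the spanning forest `T` in the graph with edge set `E`. -/
def eaP (E T : Finset PEdge) (ω : PEdge → ℝ) : ℕ := (E.filter (extActiveP T ω)).card

def adjL (E : Finset LEdge) (u v : ℕ) : Prop := ∃ e ∈ E, e.1 = (u, v) ∨ e.1 = (v, u)
def reachL (E : Finset LEdge) : ℕ → ℕ → Prop := Relation.ReflTransGen (adjL E)
def connL (V : Finset ℕ) (E : Finset LEdge) : Prop := ∀ u ∈ V, ∀ v ∈ V, reachL E u v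
def IsLTree (V : Finset ℕ) (T : Finset LEdge) : Prop := connL V T ∧ T.card + 1 = V.card

def extActiveL (T : Finset LEdge) (ω : LEdge → ℝ) (e : LEdge) : Prop :=
  e ∉ T ∧ reachL T e.1.1 e.1.2 ∧ ∀ e' ∈ T, ¬ reachL (T.erase e') e.1.1 e.1.2 → ω e < ω e'

def eaL (E T : Finset LEdge) (ω : LEdge → ℝ) : ℕ := (E.filter (extActiveL T ω)).card

def omega1 (N : ℕ) (e : PEdge) : ℝ := (e.1 : ℝ) + (e.2 : ℝ) / (N : ℝ)
def omega2 (N : ℕ) (e : PEdge) : ℝ := ((N + 1 - e.2 : ℕ) : ℝ) + ((N + 1 - e.1 : ℕ) : ℝ) / (N : ℝ)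
def omegaLex (n : ℕ) (e : PEdge) : ℝ := ((e.1 * (n + 1) + e.2 : ℕ) : ℝ)

/-- representative (minimum) of the component of `x` in the forest `F` on vertex set `V`. -/
def rep (V : Finset ℕ) (F : Finset LEdge) (x : ℕ) : ℕ :=
  if hx : x ∈ V then
    (V.filter fun y => reachL F x y).min'
      ⟨x, Finset.mem_filter.mpr ⟨hx, Relation.ReflTransGen.refl⟩⟩
  else x

/-- image of an edge in the quotient graph `G • F`; the label encodes the original edge. -/
def quotEdge (ρ : ℕ → ℕ) (e : LEdge) : LEdge :=
  ((ρ e.1.1, ρ e.1.2), Nat.pair (Nat.pair e.1.1 e.1.2) e.2)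

/-- recover the original edge from a quotient edge. -/
def decodeE (e : LEdge) : LEdge :=
  (((Nat.unpair (Nat.unpair e.2).1).1, (Nat.unpair (Nat.unpair e.2).1).2), (Nat.unpair e.2).2)

/-- tiering map on `[n]` induced by `f : Fin n → Fin m` (tiers `1,...,m`). -/
def tf (n m : ℕ) (f : Fin n → Fin m) : ℕ → ℕ := fun v =>
  if h : v ∈ Finset.Icc 1 n then
    (f ⟨v - 1, by have := Finset.mem_Icc.mp h; omega⟩).1 + 1
  else 0

/-- `G` is a tiered graph with `m` tiers. -/
def IsTieredM (m : ℕ) (G : PreGraph) : Prop :=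
  (∀ e ∈ G.E, e.1 ∈ G.V ∧ e.2 ∈ G.V ∧ e.1 < e.2) ∧
  (∀ v ∈ G.V, G.t v ∈ Finset.Icc 1 m) ∧
  (∀ e ∈ G.E, G.t e.1 < G.t e.2) ∧
  (∀ i ∈ Finset.Icc 1 m, ∃ v ∈ G.V, G.t v = i)

/-- weight polynomial `P_p(q)` (recursive weight), evaluated at `q`. -/
def Pw (n m : ℕ) (p : ℕ → ℕ) (q : ℤ) : ℤ :=
  ∑ f : Fin n → Fin m,
    ∑ E ∈ ((Finset.Icc 1 n ×ˢ Finset.Icc 1 n).powerset.filter fun E =>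
        IsTreeG ⟨Finset.Icc 1 n, E, tf n m f⟩ ∧ IsTieredM m ⟨Finset.Icc 1 n, E, tf n m f⟩ ∧
        ∀ i ∈ Finset.Icc 1 m, ((Finset.Icc 1 n).filter fun v => tf n m f v = i).card = p i),
      q ^ weight ⟨Finset.Icc 1 n, E, tf n m f⟩

/-- weight polynomial `P_p(q)` with the weight of a tiered tree given by its external
activity in the complete tiered graph it determines (lexicographic edge order). -/
def PwEA (n m : ℕ) (p : ℕ → ℕ) (q : ℤ) : ℤ :=
  ∑ f : Fin n → Fin m,
    ∑ E ∈ ((Finset.Icc 1 n ×ˢ Finset.Icc 1 n).powerset.filter fun E =>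
        IsTreeG ⟨Finset.Icc 1 n, E, tf n m f⟩ ∧ IsTieredM m ⟨Finset.Icc 1 n, E, tf n m f⟩ ∧
        ∀ i ∈ Finset.Icc 1 m, ((Finset.Icc 1 n).filter fun v => tf n m f v = i).card = p i),
      q ^ eaP (ctEM n (tf n m f)) E (omegaLex n)

/-- `T^c_G(y)`: the Tutte evaluation `T_G(1,y)` (spanning tree expansion) for a connected
graph, `0` otherwise. -/
def TcP (V : Finset ℕ) (E : Finset PEdge) (ω : PEdge → ℝ) (y : ℤ) : ℤ :=
  if connP V E then ∑ T ∈ E.powerset.filter (fun T => IsTreeOn V T), y ^ eaP E T ω else 0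

/-- edge multiset of `H ∪ Q_S`: `H`-edges (labels `≠ 0`) together with the complete
tiered graph on `U` with tier-1 set `S` (labelled `0`). -/
def qE (U : Finset ℕ) (EH : Finset LEdge) (S : Finset ℕ) : Finset LEdge :=
  EH ∪ (ctE2 S (U \ S)).image fun p => (p, 0)

/-- `(S,T) ↦ (S*, T*)`: the dual quasi-tiered tree. -/
def dualTree (U : Finset ℕ) (ST : Finset ℕ × Finset LEdge) : Finset ℕ × Finset LEdge :=
  (U.filter fun v =>
      (cdual ⟨U, (ST.2.filter fun e => e.2 = 0).image Prod.fst,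
        fun w => if w ∈ ST.1 then 1 else 2⟩).t v = 1,
   (ST.2.filter fun e => e.2 ≠ 0) ∪
     (cdual ⟨U, (ST.2.filter fun e => e.2 = 0).image Prod.fst,
        fun w => if w ∈ ST.1 then 1 else 2⟩).E.image fun p => (p, 0))

/-- tiered forests on `U` with tier sizes `(p1, p2)` (tier map normalised off `U`). -/
def ForestSet (U : Finset ℕ) (p1 p2 : ℕ) : Set PreGraph :=
  {F | F.V = U ∧ IsTiered F ∧ IsForest F ∧
    (U.filter fun v => F.t v = 1).card = p1 ∧
    (U.filter fun v => F.t v = 2).card = p2 ∧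
    ∀ v, v ∉ U → F.t v = 0}

-- auxiliary lemmas (to be inserted before stmt5)
lemma flip_def {V : Finset ℕ} {x : ℕ} (hx : x ∈ V) :
    flipMap V x = ((V.orderIsoOfFin rfl)
      ⟨V.card - 1 - ((V.orderIsoOfFin rfl).symm ⟨x, hx⟩).1, by
        have h := ((V.orderIsoOfFin rfl).symm ⟨x, hx⟩).isLt; omega⟩).1 := dif_pos hx

lemma flip_mem {V : Finset ℕ} {x : ℕ} (hx : x ∈ V) : flipMap V x ∈ V := by
  rw [flip_def hx]; exact ((V.orderIsoOfFin rfl) _).2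

lemma flipMap_flip_flip {V : Finset ℕ} {x : ℕ} (hx : x ∈ V) : flipMap V (flipMap V x) = x := by
  have h1 : flipMap V x ∈ V := flip_mem hx
  set iso := V.orderIsoOfFin rfl with hiso
  have hlt := (iso.symm ⟨x, hx⟩).isLt
  have hval : (⟨flipMap V x, h1⟩ : {y // y ∈ V}) =
      iso ⟨V.card - 1 - (iso.symm ⟨x, hx⟩).1, by omega⟩ := by
    apply Subtype.ext
    show flipMap V x = _
    exact flip_def hx
  have h2 : (iso.symm ⟨flipMap V x, h1⟩).1 = V.card - 1 - (iso.symm ⟨x, hx⟩).1 := by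
    rw [iso.symm_apply_eq.mpr hval]
  rw [flip_def h1]
  have h3 : (⟨V.card - 1 - (iso.symm ⟨flipMap V x, h1⟩).1, by
      have := (iso.symm ⟨flipMap V x, h1⟩).isLt; omega⟩ : Fin V.card) = iso.symm ⟨x, hx⟩ := by
    apply Fin.ext; simp only [h2]; omega
  exact (congrArg Subtype.val (congrArg iso h3)).trans (congrArg Subtype.val (iso.apply_symm_apply _))

lemma flip_lt {V : Finset ℕ} {x y : ℕ} (hx : x ∈ V) (hy : y ∈ V) (h : x < y) :
    flipMap V y < flipMap V x := by
  rw [flip_def hx, flip_def hy]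
  set iso := V.orderIsoOfFin rfl
  have hij : iso.symm ⟨x, hx⟩ < iso.symm ⟨y, hy⟩ := by
    rw [OrderIso.lt_iff_lt]; exact Subtype.mk_lt_mk.mpr h
  have hi := (iso.symm ⟨x, hx⟩).isLt
  have hj := (iso.symm ⟨y, hy⟩).isLt
  have hlt : (⟨V.card - 1 - (iso.symm ⟨y, hy⟩).1, by omega⟩ : Fin V.card)
      < ⟨V.card - 1 - (iso.symm ⟨x, hx⟩).1, by omega⟩ := by
    rw [Fin.mk_lt_mk]; rw [Fin.lt_def] at hij; omega
  exact (iso.lt_iff_lt.mpr hlt)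

lemma adjP_symm {E : Finset PEdge} {u v : ℕ} (h : adjP E u v) : adjP E v u := h.symm

lemma reachP_symm {E : Finset PEdge} {u v : ℕ} (h : reachP E u v) : reachP E v u :=
  by
  induction h with
  | refl => exact Relation.ReflTransGen.refl
  | tail _ hab ih => exact Relation.ReflTransGen.head (adjP_symm hab) ih

lemma mem_comp_self {V : Finset ℕ} {E : Finset PEdge} {x : ℕ} (hx : x ∈ V) :
    x ∈ comp V E x := Finset.mem_filter.mpr ⟨hx, Relation.ReflTransGen.refl⟩

lemma comp_eq_of_reach {V : Finset ℕ} {E : Finset PEdge} {x y : ℕ}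
    (h : reachP E x y) : comp V E x = comp V E y := by
  ext z; simp only [comp, Finset.mem_filter, and_congr_right_iff]
  exact fun _ => ⟨fun hz => (reachP_symm h).trans hz, fun hz => h.trans hz⟩

lemma reach_of_mem_comp {V : Finset ℕ} {E : Finset PEdge} {x y : ℕ}
    (h : y ∈ comp V E x) : reachP E x y := (Finset.mem_filter.mp h).2

lemma mem_of_mem_comp {V : Finset ℕ} {E : Finset PEdge} {x y : ℕ}
    (h : y ∈ comp V E x) : y ∈ V := (Finset.mem_filter.mp h).1

/-- the global component-wise flip map. -/
def phi (V : Finset ℕ) (E : Finset PEdge) (x : ℕ) : ℕ := flipMap (comp V E x) x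

lemma phi_mem_comp {V : Finset ℕ} {E : Finset PEdge} {x : ℕ} (hx : x ∈ V) :
    phi V E x ∈ comp V E x := flip_mem (mem_comp_self hx)

lemma phi_mem {V : Finset ℕ} {E : Finset PEdge} {x : ℕ} (hx : x ∈ V) :
    phi V E x ∈ V := mem_of_mem_comp (phi_mem_comp hx)

lemma reach_phi {V : Finset ℕ} {E : Finset PEdge} {x : ℕ} (hx : x ∈ V) :
    reachP E x (phi V E x) := reach_of_mem_comp (phi_mem_comp hx)

lemma comp_phi {V : Finset ℕ} {E : Finset PEdge} {x : ℕ} (hx : x ∈ V) :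
    comp V E (phi V E x) = comp V E x := (comp_eq_of_reach (reach_phi hx)).symm

lemma phi_phi {V : Finset ℕ} {E : Finset PEdge} {x : ℕ} (hx : x ∈ V) :
    phi V E (phi V E x) = x := by
  rw [phi, comp_phi hx]
  exact flipMap_flip_flip (mem_comp_self hx)

/-- the dual edge map. -/
def dmap (V : Finset ℕ) (E : Finset PEdge) (e : PEdge) : PEdge :=
  (phi V E e.2, phi V E e.1)

lemma reach_of_edge {E : Finset PEdge} {e : PEdge} (he : e ∈ E) : reachP E e.1 e.2 :=
  Relation.ReflTransGen.single (Or.inl he)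

lemma comp_edge {V : Finset ℕ} {E : Finset PEdge} {e : PEdge} (he : e ∈ E) :
    comp V E e.1 = comp V E e.2 := comp_eq_of_reach (reach_of_edge he)

/-- the cdual edge map agrees with `dmap` on edges of `E`. -/
lemma cmap_eq_dmap {V : Finset ℕ} {E : Finset PEdge} {e : PEdge} (he : e ∈ E) :
    (flipMap (comp V E e.1) e.2, flipMap (comp V E e.1) e.1) = dmap V E e := by
  rw [dmap, phi, phi, comp_edge (V := V) he]

lemma cdual_E {G : PreGraph} (hE : ∀ e ∈ G.E, e.1 ∈ G.V ∧ e.2 ∈ G.V) :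
    (cdual G).E = G.E.image (dmap G.V G.E) := by
  apply Finset.image_congr
  intro e he
  exact cmap_eq_dmap he

lemma dmap_dmap {V : Finset ℕ} {E : Finset PEdge} {e : PEdge}
    (h1 : e.1 ∈ V) (h2 : e.2 ∈ V) : dmap V E (dmap V E e) = e := by
  simp only [dmap, phi_phi h1, phi_phi h2]

/-- transfer of reachability to the dual graph. -/
lemma reach_to_image {V : Finset ℕ} {E S : Finset PEdge} (hSE : S ⊆ E)
    (hE : ∀ e ∈ E, e.1 ∈ V ∧ e.2 ∈ V) {a b : ℕ}
    (h : reachP S a b) (ha : a ∈ V) :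
    b ∈ V ∧ reachP (S.image (dmap V E)) (phi V E a) (phi V E b) := by
  induction h with
  | refl => exact ⟨ha, Relation.ReflTransGen.refl⟩
  | tail hr hadj ih =>
    rename_i w c
    obtain ⟨hw, hreach⟩ := ih
    have hc : c ∈ V ∧ adjP (S.image (dmap V E)) (phi V E w) (phi V E c) := by
      rcases hadj with he | he
      · exact ⟨(hE _ (hSE he)).2, Or.inr (Finset.mem_image_of_mem _ he)⟩
      · exact ⟨(hE _ (hSE he)).1, Or.inl (Finset.mem_image_of_mem _ he)⟩
    exact ⟨hc.1, hreach.tail hc.2⟩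

/-- transfer of reachability from the dual graph. -/
lemma reach_of_image {V : Finset ℕ} {E S : Finset PEdge} (hSE : S ⊆ E)
    (hE : ∀ e ∈ E, e.1 ∈ V ∧ e.2 ∈ V) {a b : ℕ}
    (h : reachP (S.image (dmap V E)) a b) (ha : a ∈ V) :
    b ∈ V ∧ reachP S (phi V E a) (phi V E b) := by
  induction h with
  | refl => exact ⟨ha, Relation.ReflTransGen.refl⟩
  | tail hr hadj ih =>
    rename_i w c
    obtain ⟨hw, hreach⟩ := ih
    have hc : c ∈ V ∧ adjP S (phi V E w) (phi V E c) := by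
      rcases hadj with he | he
      · obtain ⟨f, hf, hfe⟩ := Finset.mem_image.mp he
        obtain ⟨hf1, hf2⟩ := hE _ (hSE hf)
        have h1 : phi V E f.2 = w := congrArg Prod.fst hfe
        have h2 : phi V E f.1 = c := congrArg Prod.snd hfe
        constructor
        · rw [← h2]; exact phi_mem hf1
        · rw [← h1, ← h2, phi_phi hf2, phi_phi hf1]
          exact Or.inr hf
      · obtain ⟨f, hf, hfe⟩ := Finset.mem_image.mp he
        obtain ⟨hf1, hf2⟩ := hE _ (hSE hf)
        have h1 : phi V E f.2 = c := congrArg Prod.fst hfe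
        have h2 : phi V E f.1 = w := congrArg Prod.snd hfe
        constructor
        · rw [← h1]; exact phi_mem hf2
        · rw [← h1, ← h2, phi_phi hf2, phi_phi hf1]
          exact Or.inl hf
    exact ⟨hc.1, hreach.tail hc.2⟩

lemma dmap_injOn {V : Finset ℕ} {E : Finset PEdge}
    (hE : ∀ e ∈ E, e.1 ∈ V ∧ e.2 ∈ V) :
    ∀ e ∈ E, ∀ f ∈ E, dmap V E e = dmap V E f → e = f := by
  intro e he f hf h
  have := congrArg (dmap V E) h
  rwa [dmap_dmap (hE e he).1 (hE e he).2, dmap_dmap (hE f hf).1 (hE f hf).2] at this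

lemma image_erase_dmap {V : Finset ℕ} {E : Finset PEdge}
    (hE : ∀ e ∈ E, e.1 ∈ V ∧ e.2 ∈ V) {e : PEdge} (he : e ∈ E) :
    (E.image (dmap V E)).erase (dmap V E e) = (E.erase e).image (dmap V E) := by
  ext x
  simp only [Finset.mem_erase, Finset.mem_image, Finset.mem_erase]
  constructor
  · rintro ⟨hne, f, hf, rfl⟩
    exact ⟨f, ⟨fun h => hne (by rw [h]), hf⟩, rfl⟩
  · rintro ⟨f, ⟨hne, hf⟩, rfl⟩
    exact ⟨fun h => hne (dmap_injOn hE f hf e he h), f, hf, rfl⟩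

lemma cdual_t (G : PreGraph) (x : ℕ) :
    (cdual G).t x = if x ∈ G.V then 3 - G.t (phi G.V G.E x) else G.t x := rfl

lemma comp_cdual {V : Finset ℕ} {E : Finset PEdge}
    (hE : ∀ e ∈ E, e.1 ∈ V ∧ e.2 ∈ V) {x : ℕ} (hx : x ∈ V) :
    comp V (E.image (dmap V E)) x = comp V E x := by
  ext y
  simp only [comp, Finset.mem_filter, and_congr_right_iff]
  intro hy
  constructor
  · intro h
    have h1 := (reach_of_image (Finset.Subset.refl E) hE h hx).2
    exact ((reach_phi hx).trans h1).trans (reachP_symm (reach_phi hy))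
  · intro h
    have h1 : reachP E (phi V E x) (phi V E y) :=
      (reachP_symm (reach_phi hx)).trans (h.trans (reach_phi hy))
    have h2 := (reach_to_image (Finset.Subset.refl E) hE h1 (phi_mem hx)).2
    rwa [phi_phi hx, phi_phi hy] at h2

lemma phi_cdual {V : Finset ℕ} {E : Finset PEdge}
    (hE : ∀ e ∈ E, e.1 ∈ V ∧ e.2 ∈ V) {x : ℕ} (hx : x ∈ V) :
    phi V (E.image (dmap V E)) x = phi V E x := by
  rw [phi, phi, comp_cdual hE hx]

lemma preGraph_ext {G H : PreGraph} (h1 : G.V = H.V) (h2 : G.E = H.E) (h3 : G.t = H.t) :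
    G = H := by
  cases G; cases H; cases h1; cases h2; cases h3; rfl

lemma cdual_mem {U : Finset ℕ} {p1 p2 : ℕ} {F : PreGraph}
    (hF : F ∈ ForestSet U p1 p2) : cdual F ∈ ForestSet U p2 p1 := by
  obtain ⟨hV, ⟨hpos', hEe, ht12, htlt⟩, hforest, hc1, hc2, hoff⟩ := hF
  obtain ⟨V, E, t⟩ := F
  dsimp only at *
  subst hV
  have hE : ∀ e ∈ E, e.1 ∈ V ∧ e.2 ∈ V := fun e he => ⟨(hEe e he).1, (hEe e he).2.1⟩
  have hEimg : (cdual ⟨V, E, t⟩).E = E.image (dmap V E) := cdual_E hE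
  have ht' : ∀ v ∈ V, (cdual ⟨V, E, t⟩).t v = 3 - t (phi V E v) := by
    intro v hv; rw [cdual_t]; exact if_pos hv
  refine ⟨rfl, ⟨hpos', ?_, ?_, ?_⟩, ?_, ?_, ?_, ?_⟩
  · -- edges of the dual
    intro e' he'
    rw [hEimg] at he'
    obtain ⟨e, he, rfl⟩ := Finset.mem_image.mp he'
    obtain ⟨h1, h2⟩ := hE e he
    refine ⟨phi_mem h2, phi_mem h1, ?_⟩
    show phi V E e.2 < phi V E e.1
    have hc : comp V E e.1 = comp V E e.2 := comp_edge he
    rw [phi, phi, ← hc]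
    exact flip_lt (mem_comp_self h1)
      (by rw [hc]; exact mem_comp_self h2) (hEe e he).2.2
  · -- tier values
    intro v hv
    rw [ht' v hv]
    rcases ht12 _ (phi_mem hv) with h | h <;> rw [h] <;> simp
  · -- tier monotone on edges
    intro e' he'
    rw [hEimg] at he'
    obtain ⟨e, he, rfl⟩ := Finset.mem_image.mp he'
    obtain ⟨h1, h2⟩ := hE e he
    show (cdual ⟨V, E, t⟩).t (phi V E e.2) < (cdual ⟨V, E, t⟩).t (phi V E e.1)
    rw [ht' _ (phi_mem h2), ht' _ (phi_mem h1), phi_phi h1, phi_phi h2]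
    have := htlt e he
    rcases ht12 _ h1 with h | h <;> rcases ht12 _ h2 with h' | h' <;> omega
  · -- forest
    intro e' he' hreach
    rw [hEimg] at he'
    obtain ⟨e, he, rfl⟩ := Finset.mem_image.mp he'
    obtain ⟨h1, h2⟩ := hE e he
    rw [hEimg, image_erase_dmap hE he] at hreach
    have h3 := (reach_of_image (Finset.erase_subset _ _) hE hreach (phi_mem h2)).2
    have h3' : reachP (E.erase e) (phi V E (phi V E e.2)) (phi V E (phi V E e.1)) := h3
    rw [phi_phi h1, phi_phi h2] at h3'
    exact hforest e he (reachP_symm h3')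
  · -- tier-1 count
    rw [show (V.filter fun v => (cdual ⟨V, E, t⟩).t v = 1)
        = V.filter fun v => t (phi V E v) = 2 from ?_]
    · rw [← hc2]
      apply Finset.card_bij' (fun v _ => phi V E v) (fun v _ => phi V E v)
      · intro a ha
        obtain ⟨ha1, ha2⟩ := Finset.mem_filter.mp ha
        exact Finset.mem_filter.mpr ⟨phi_mem ha1, ha2⟩
      · intro a ha
        obtain ⟨ha1, ha2⟩ := Finset.mem_filter.mp ha
        exact Finset.mem_filter.mpr ⟨phi_mem ha1, by rw [phi_phi ha1]; exact ha2⟩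
      · intro a ha; exact phi_phi (Finset.mem_filter.mp ha).1
      · intro a ha; exact phi_phi (Finset.mem_filter.mp ha).1
    · apply Finset.filter_congr
      intro v hv
      rw [ht' v hv]
      rcases ht12 _ (phi_mem hv) with h | h <;> rw [h] <;> simp
  · -- tier-2 count
    rw [show (V.filter fun v => (cdual ⟨V, E, t⟩).t v = 2)
        = V.filter fun v => t (phi V E v) = 1 from ?_]
    · rw [← hc1]
      apply Finset.card_bij' (fun v _ => phi V E v) (fun v _ => phi V E v)
      · intro a ha
        obtain ⟨ha1, ha2⟩ := Finset.mem_filter.mp ha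
        exact Finset.mem_filter.mpr ⟨phi_mem ha1, ha2⟩
      · intro a ha
        obtain ⟨ha1, ha2⟩ := Finset.mem_filter.mp ha
        exact Finset.mem_filter.mpr ⟨phi_mem ha1, by rw [phi_phi ha1]; exact ha2⟩
      · intro a ha; exact phi_phi (Finset.mem_filter.mp ha).1
      · intro a ha; exact phi_phi (Finset.mem_filter.mp ha).1
    · apply Finset.filter_congr
      intro v hv
      rw [ht' v hv]
      rcases ht12 _ (phi_mem hv) with h | h <;> rw [h] <;> simp
  · -- off U
    intro v hv
    rw [cdual_t, if_neg hv]
    exact hoff v hv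

lemma cdual_cdual {G : PreGraph} (hE : ∀ e ∈ G.E, e.1 ∈ G.V ∧ e.2 ∈ G.V)
    (ht12 : ∀ v ∈ G.V, G.t v = 1 ∨ G.t v = 2) : cdual (cdual G) = G := by
  obtain ⟨V, E, t⟩ := G
  dsimp only at hE ht12
  have hEimg : (cdual ⟨V, E, t⟩).E = E.image (dmap V E) := cdual_E hE
  have hE' : ∀ e ∈ (cdual ⟨V, E, t⟩).E, e.1 ∈ V ∧ e.2 ∈ V := by
    rw [hEimg]
    intro e' he'
    obtain ⟨e, he, rfl⟩ := Finset.mem_image.mp he'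
    exact ⟨phi_mem (hE e he).2, phi_mem (hE e he).1⟩
  apply preGraph_ext
  · rfl
  · -- edges
    show (cdual (cdual ⟨V, E, t⟩)).E = E
    rw [cdual_E hE']
    show ((cdual ⟨V, E, t⟩).E).image (dmap V (cdual ⟨V, E, t⟩).E) = E
    rw [hEimg]
    rw [Finset.image_image]
    have : ∀ e ∈ E, (dmap V (E.image (dmap V E)) ∘ dmap V E) e = e := by
      intro e he
      obtain ⟨h1, h2⟩ := hE e he
      show dmap V (E.image (dmap V E)) (dmap V E e) = e
      rw [dmap, dmap]
      simp only [phi_cdual hE (phi_mem h1), phi_cdual hE (phi_mem h2)]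
      exact dmap_dmap h1 h2
    rw [Finset.image_congr this, Finset.image_id']
  · -- tiering
    funext x
    by_cases hx : x ∈ V
    · rw [cdual_t, if_pos (show x ∈ (cdual ⟨V, E, t⟩).V from hx)]
      show 3 - (cdual ⟨V, E, t⟩).t (phi V (cdual ⟨V, E, t⟩).E x) = t x
      rw [hEimg, phi_cdual hE hx]
      have h2 : (cdual ⟨V, E, t⟩).t (phi V E x) = 3 - t (phi V E (phi V E x)) := by
        rw [cdual_t]; exact if_pos (phi_mem hx)
      rw [h2, phi_phi hx]
      rcases ht12 x hx with h | h <;> omega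
    · rw [cdual_t, if_neg (show x ∉ (cdual ⟨V, E, t⟩).V from hx), cdual_t]
      exact if_neg hx


/-- `F ↦ F'` is a bijection from tiered forests on `U` with tier sizes
`(p1, p2)` to tiered forests on `U` with tier sizes `(p2, p1)`. -/
theorem stmt5 (U : Finset ℕ) (hU : U.Nonempty) (hpos : ∀ v ∈ U, 0 < v)
    (p1 p2 : ℕ) (hp : p1 + p2 = U.card) :
    Set.BijOn cdual (ForestSet U p1 p2) (ForestSet U p2 p1) := by
  have hinv : ∀ (q1 q2 : ℕ), ∀ F ∈ ForestSet U q1 q2, cdual (cdual F) = F := by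
    intro q1 q2 F hF
    obtain ⟨hV, ⟨_, hEe, ht12, _⟩, _⟩ := hF
    exact cdual_cdual (fun e he => ⟨(hEe e he).1, (hEe e he).2.1⟩) ht12
  refine ⟨fun F hF => cdual_mem hF, ?_, ?_⟩
  · intro F hF G hG h
    have h2 := congrArg cdual h
    rwa [hinv _ _ F hF, hinv _ _ G hG] at h2
  · intro G hG
    exact ⟨cdual G, cdual_mem hG, hinv _ _ G hG⟩

end
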